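/- Let p be a probability vector on {1,…,d}, let Ψ_1,…,Ψ_d be orthonormal vectors in ℂ^m, and let σ = ∑_{i=1}^d p_i · E_ii ⊗ |Ψ_i⟩⟨Ψ_i| be the corresponding density matrix on ℂ^d ⊗ ℂ^m. Let (B_l)_{l∈L} be any projective measurement on ℂ^d. Define the system-side joint distribution p_{BA}(l,i) = p_i · Re((B_l)_{ii}) (the joint distribution of measuring the pointer observable A, with projectors E_ii, followed by B). Then: (a) for every projective measurement (Y_n) on ℂ^m, with p_{BY}(l,n) = Re Tr((B_l ⊗ Y_n) σ), one has I(B:Y) ≤ I(B:A); and (b) the pointer measurement achieves this bound: with p_{BX}(l,i) = Re Tr((B_l ⊗ |Ψ_i⟩⟨Ψ_i|) σ), one has p_{BX} = p_{BA}, hence I(B:X) = I(B:A). Consequently the maximal information about B extractable from the fragment equals I(B:A). -/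

import Mathlib

open Matrix Kronecker BigOperators

set_option maxRecDepth 8000

noncomputable section

/-- Standard Hermitian inner product on `Fin m → ℂ` (conjugate-linear in the first slot). -/
def cinner {m : ℕ} (u v : Fin m → ℂ) : ℂ :=
  ∑ k, (starRingEnd ℂ) (u k) * v k

/-- The matrix unit `E_ii`. -/
def matE {d : ℕ} (i : Fin d) : Matrix (Fin d) (Fin d) ℂ :=
  Matrix.single i i 1

/-- The rank-one projector `|v⟩⟨v|`. -/
def projVec {m : ℕ} (v : Fin m → ℂ) : Matrix (Fin m) (Fin m) ℂ :=
  Matrix.of fun k l => v k * (starRingEnd ℂ) (v l)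

/-- The perfectly correlated system–fragment state `σ = ∑ᵢ pᵢ E_ii ⊗ |Ψᵢ⟩⟨Ψᵢ|`. -/
def sigmaSF {d m : ℕ} (p : Fin d → ℝ) (Ψ : Fin d → Fin m → ℂ) :
    Matrix (Fin d × Fin m) (Fin d × Fin m) ℂ :=
  ∑ i, (p i : ℂ) • (matE i ⊗ₖ projVec (Ψ i))

/-- A projective measurement: a finite family of Hermitian, mutually orthogonal
idempotents summing to the identity. -/
def IsProjMeasurement {ι n : Type*} [Fintype ι] [DecidableEq ι] [Fintype n] [DecidableEq n]
    (P : ι → Matrix n n ℂ) : Prop :=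
  (∀ k, (P k).IsHermitian) ∧
  (∀ k l, P k * P l = if k = l then P k else 0) ∧
  (∑ k, P k = 1)

/-- Mutual information of a joint pmf `p` on `I × J`. -/
def mutualInfo {I J : Type*} [Fintype I] [Fintype J] (p : I → J → ℝ) : ℝ :=
  ∑ i, ∑ j, if p i j = 0 then 0
    else p i j * Real.log (p i j / ((∑ j', p i j') * (∑ i', p i' j)))

/-! ### Auxiliary lemmas -/

lemma cinner_mulVec {m : ℕ} (u v : Fin m → ℂ) (A : Matrix (Fin m) (Fin m) ℂ) :
    cinner u (A.mulVec v) = cinner (Aᴴ.mulVec u) v := by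
  simp only [cinner, Matrix.mulVec, dotProduct, conjTranspose_apply, map_sum,
    Finset.mul_sum, Finset.sum_mul]
  rw [Finset.sum_comm]
  apply Finset.sum_congr rfl; intro k _; apply Finset.sum_congr rfl; intro j _
  simp only [_root_.map_mul, starRingEnd_apply, star_star]; ring

lemma cinner_self_re_nonneg {m : ℕ} (v : Fin m → ℂ) : 0 ≤ (cinner v v).re := by
  rw [cinner, Complex.re_sum]
  apply Finset.sum_nonneg; intro k _
  rw [← Complex.normSq_eq_conj_mul_self]
  exact Complex.normSq_nonneg (v k)

lemma psd_re_nonneg {m : ℕ} (P : Matrix (Fin m) (Fin m) ℂ) (hH : P.IsHermitian)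
    (hI : P * P = P) (v : Fin m → ℂ) : 0 ≤ (cinner v (P.mulVec v)).re := by
  have : cinner v (P.mulVec v) = cinner (P.mulVec v) (P.mulVec v) := by
    conv_lhs => rw [← hI, ← Matrix.mulVec_mulVec, cinner_mulVec, hH.eq]
  rw [this]; exact cinner_self_re_nonneg _

lemma trace_mul_projVec {m : ℕ} (Y : Matrix (Fin m) (Fin m) ℂ) (v : Fin m → ℂ) :
    (Y * projVec v).trace = cinner v (Y.mulVec v) := by
  simp only [Matrix.trace, Matrix.diag, Matrix.mul_apply, projVec, Matrix.of_apply, cinner,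
    Matrix.mulVec, dotProduct, Finset.mul_sum]
  apply Finset.sum_congr rfl; intro k _; apply Finset.sum_congr rfl; intro j _; ring

lemma trace_mul_matE {d : ℕ} (Bm : Matrix (Fin d) (Fin d) ℂ) (i : Fin d) :
    (Bm * matE i).trace = Bm i i := by
  simp [matE, Matrix.trace, Matrix.diag, Matrix.mul_apply, Matrix.single,
    Finset.sum_ite_eq, ite_and]

lemma trace_formula {d m : ℕ} (p : Fin d → ℝ) (Ψ : Fin d → Fin m → ℂ)
    (Bm : Matrix (Fin d) (Fin d) ℂ) (Y : Matrix (Fin m) (Fin m) ℂ) :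
    ((Bm ⊗ₖ Y) * sigmaSF p Ψ).trace
      = ∑ i, (p i : ℂ) * (Bm i i * cinner (Ψ i) (Y.mulVec (Ψ i))) := by
  rw [sigmaSF, Finset.mul_sum, Matrix.trace_sum]
  refine Finset.sum_congr rfl fun i _ => ?_
  rw [Matrix.mul_smul, Matrix.trace_smul, ← Matrix.mul_kronecker_mul, Matrix.trace_kronecker,
    trace_mul_matE, trace_mul_projVec, smul_eq_mul]

lemma trace_re {d m : ℕ} (p : Fin d → ℝ) (Ψ : Fin d → Fin m → ℂ)
    (Bm : Matrix (Fin d) (Fin d) ℂ) (hH : Bm.IsHermitian) (Y : Matrix (Fin m) (Fin m) ℂ) :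
    (((Bm ⊗ₖ Y) * sigmaSF p Ψ).trace).re
      = ∑ i, (p i * (Bm i i).re) * (cinner (Ψ i) (Y.mulVec (Ψ i))).re := by
  rw [trace_formula, Complex.re_sum]
  refine Finset.sum_congr rfl fun i _ => ?_
  have him : (Bm i i).im = 0 := by
    rw [← Complex.conj_eq_iff_im]
    exact hH.apply i i
  simp only [Complex.mul_re, Complex.mul_im, Complex.ofReal_re, Complex.ofReal_im, him]
  ring

lemma mutualInfo_eq {I J : Type*} [Fintype I] [Fintype J] (p : I → J → ℝ) :
    mutualInfo p
      = ∑ i, ∑ j, p i j * Real.log (p i j / ((∑ j', p i j') * (∑ i', p i' j))) := by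
  unfold mutualInfo
  refine Finset.sum_congr rfl fun i _ => Finset.sum_congr rfl fun j _ => ?_
  split_ifs with h
  · simp [h]
  · rfl

lemma logSum {ι : Type*} [Fintype ι] (a b : ι → ℝ) (ha : ∀ i, 0 ≤ a i)
    (hb : ∀ i, 0 ≤ b i) (hab : ∀ i, b i = 0 → a i = 0) :
    (∑ i, a i) * Real.log ((∑ i, a i) / (∑ i, b i))
      ≤ ∑ i, a i * Real.log (a i / b i) := by
  classical
  set t := Finset.univ.filter (fun i => 0 < b i) with ht
  have hbz : ∀ i ∈ Finset.univ, i ∉ t → b i = 0 := by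
    intro i _ hi
    have : ¬ 0 < b i := by simpa [ht] using hi
    exact le_antisymm (not_lt.mp this) (hb i)
  have haz : ∀ i ∈ Finset.univ, i ∉ t → a i = 0 := fun i h1 h2 => hab i (hbz i h1 h2)
  have hA : ∑ i, a i = ∑ i ∈ t, a i :=
    (Finset.sum_subset (Finset.subset_univ t) haz).symm
  have hBe : ∑ i, b i = ∑ i ∈ t, b i :=
    (Finset.sum_subset (Finset.subset_univ t) hbz).symm
  have hR : ∑ i, a i * Real.log (a i / b i) = ∑ i ∈ t, a i * Real.log (a i / b i) :=
    (Finset.sum_subset (Finset.subset_univ t) (fun i h1 h2 => by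
      rw [haz i h1 h2]; ring)).symm
  rw [hA, hBe, hR]
  have hbt : ∀ i ∈ t, 0 < b i := fun i hi => by simpa [ht] using hi
  rcases Finset.eq_empty_or_nonempty t with h | hne
  · simp [h]
  by_cases hBz : ∑ i ∈ t, b i = 0
  · exact absurd hBz (ne_of_gt (Finset.sum_pos hbt hne))
  have hBpos : 0 < ∑ i ∈ t, b i :=
    lt_of_le_of_ne (Finset.sum_nonneg fun i _ => hb i) (Ne.symm hBz)
  set Bs := ∑ i ∈ t, b i with hBs
  have hJ := Real.convexOn_mul_log.map_sum_le (t := t) (w := fun i => b i / Bs)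
      (p := fun i => a i / b i)
      (fun i _ => div_nonneg (hb i) hBpos.le)
      (by rw [← Finset.sum_div, div_self hBz])
      (fun i hi => Set.mem_Ici.mpr (div_nonneg (ha i) (hb i)))
  have hx : ∑ i ∈ t, (b i / Bs) • (a i / b i) = (∑ i ∈ t, a i) / Bs := by
    rw [Finset.sum_div]
    refine Finset.sum_congr rfl fun i hi => ?_
    have hbi : b i ≠ 0 := ne_of_gt (hbt i hi)
    field_simp
    rw [smul_eq_mul, ← mul_assoc, mul_div_cancel₀ _ hBz, mul_div_cancel₀ _ hbi]
  simp only [smul_eq_mul] at hJ hx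
  rw [hx] at hJ
  have h2 := mul_le_mul_of_nonneg_left hJ hBpos.le
  have hL : Bs * ((∑ i ∈ t, a i) / Bs * Real.log ((∑ i ∈ t, a i) / Bs))
      = (∑ i ∈ t, a i) * Real.log ((∑ i ∈ t, a i) / Bs) := by
    field_simp
  have hRr : Bs * ∑ i ∈ t, (b i / Bs) * (a i / b i * Real.log (a i / b i))
      = ∑ i ∈ t, a i * Real.log (a i / b i) := by
    rw [Finset.mul_sum]
    refine Finset.sum_congr rfl fun i hi => ?_
    have hbi : b i ≠ 0 := ne_of_gt (hbt i hi)
    field_simp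
  rw [hL, hRr] at h2
  exact h2

lemma dpi {L I N : Type*} [Fintype L] [Fintype I] [Fintype N]
    (s : L → I → ℝ) (q : I → N → ℝ) (hs : ∀ l i, 0 ≤ s l i)
    (hq : ∀ i n, 0 ≤ q i n) (hq1 : ∀ i, ∑ n, q i n = 1) :
    mutualInfo (fun l n => ∑ i, s l i * q i n) ≤ mutualInfo s := by
  classical
  rw [mutualInfo_eq, mutualInfo_eq]
  have hs1 : ∀ l i, s l i ≤ ∑ i', s l i' := fun l i =>
    Finset.single_le_sum (fun i' _ => hs l i') (Finset.mem_univ i)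
  have hs2 : ∀ l i, s l i ≤ ∑ l', s l' i := fun l i =>
    Finset.single_le_sum (fun l' _ => hs l' i) (Finset.mem_univ l)
  have hmarg1 : ∀ l, (∑ n, ∑ i, s l i * q i n) = ∑ i, s l i := by
    intro l
    rw [Finset.sum_comm]
    refine Finset.sum_congr rfl fun i _ => ?_
    rw [← Finset.mul_sum, hq1 i, mul_one]
  have hmarg2 : ∀ n, (∑ l, ∑ i, s l i * q i n) = ∑ i, (∑ l', s l' i) * q i n := by
    intro n
    rw [Finset.sum_comm]
    refine Finset.sum_congr rfl fun i _ => ?_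
    rw [← Finset.sum_mul]
  have key : ∀ l n,
      (∑ i, s l i * q i n) * Real.log ((∑ i, s l i * q i n) /
        ((∑ n', ∑ i, s l i * q i n') * (∑ l', ∑ i, s l' i * q i n)))
      ≤ ∑ i, (s l i * q i n) *
          Real.log (s l i / ((∑ i', s l i') * (∑ l', s l' i))) := by
    intro l n
    have hls := logSum (fun i => s l i * q i n)
        (fun i => (∑ i', s l i') * ((∑ l', s l' i) * q i n))
        (fun i => mul_nonneg (hs l i) (hq i n))
        (fun i => mul_nonneg (Finset.sum_nonneg fun i' _ => hs l i')
          (mul_nonneg (Finset.sum_nonneg fun l' _ => hs l' i) (hq i n)))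
        (fun i hbz => by
          show s l i * q i n = 0
          rcases mul_eq_zero.mp hbz with h | h
          · have : s l i = 0 := le_antisymm (h ▸ hs1 l i) (hs l i)
            rw [this, zero_mul]
          rcases mul_eq_zero.mp h with h' | h'
          · have : s l i = 0 := le_antisymm (h' ▸ hs2 l i) (hs l i)
            rw [this, zero_mul]
          · rw [h', mul_zero])
    have hsb : (∑ i, (∑ i', s l i') * ((∑ l', s l' i) * q i n))
        = (∑ n', ∑ i, s l i * q i n') * (∑ l', ∑ i, s l' i * q i n) := by
      rw [hmarg1 l, hmarg2 n, Finset.mul_sum]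
    rw [hsb] at hls
    refine le_trans hls (le_of_eq (Finset.sum_congr rfl fun i _ => ?_))
    show s l i * q i n * Real.log (s l i * q i n /
        ((∑ i', s l i') * ((∑ l', s l' i) * q i n)))
      = s l i * q i n * Real.log (s l i / ((∑ i', s l i') * (∑ l', s l' i)))
    by_cases hqn : q i n = 0
    · rw [hqn]; ring
    by_cases hsi : s l i = 0
    · rw [hsi]; ring
    congr 1
    rw [show (∑ i', s l i') * ((∑ l', s l' i) * q i n)
        = ((∑ i', s l i') * (∑ l', s l' i)) * q i n by ring,
      mul_div_mul_right _ _ hqn]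
  calc ∑ l, ∑ n, (∑ i, s l i * q i n) * Real.log ((∑ i, s l i * q i n) /
        ((∑ n', ∑ i, s l i * q i n') * (∑ l', ∑ i, s l' i * q i n)))
      ≤ ∑ l, ∑ n, ∑ i, (s l i * q i n) *
          Real.log (s l i / ((∑ i', s l i') * (∑ l', s l' i))) :=
        Finset.sum_le_sum fun l _ => Finset.sum_le_sum fun n _ => key l n
    _ = ∑ l, ∑ i, s l i * Real.log (s l i / ((∑ i', s l i') * (∑ l', s l' i))) := by
        refine Finset.sum_congr rfl fun l _ => ?_
        rw [Finset.sum_comm]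
        refine Finset.sum_congr rfl fun i _ => ?_
        calc ∑ n, s l i * q i n * Real.log (s l i / ((∑ i', s l i') * (∑ l', s l' i)))
            = ∑ n, (s l i * Real.log (s l i / ((∑ i', s l i') * (∑ l', s l' i)))) * q i n :=
              Finset.sum_congr rfl fun n _ => by ring
          _ = (s l i * Real.log (s l i / ((∑ i', s l i') * (∑ l', s l' i)))) * ∑ n, q i n :=
              (Finset.mul_sum _ _ _).symm
          _ = s l i * Real.log (s l i / ((∑ i', s l i') * (∑ l', s l' i))) := by
              rw [hq1 i, mul_one]

lemma cinner_single {d : ℕ} (A : Matrix (Fin d) (Fin d) ℂ) (i : Fin d) :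
    cinner (Pi.single i 1) (A.mulVec (Pi.single i 1)) = A i i := by
  simp [cinner, Matrix.mulVec, dotProduct, Pi.single_apply, Finset.mul_sum,
    Finset.sum_ite_eq, apply_ite]

lemma cinner_proj_mulVec {m : ℕ} (u v w : Fin m → ℂ) :
    cinner u ((projVec v).mulVec w) = cinner u v * cinner v w := by
  simp only [cinner, projVec, Matrix.mulVec, dotProduct, Matrix.of_apply,
    Finset.mul_sum, Finset.sum_mul]
  rw [Finset.sum_comm]
  refine Finset.sum_congr rfl fun k _ => Finset.sum_congr rfl fun j _ => ?_
  ring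

lemma cinner_sum_mulVec {m : ℕ} {N : Type*} [Fintype N] (v : Fin m → ℂ)
    (Y : N → Matrix (Fin m) (Fin m) ℂ) :
    ∑ n, cinner v ((Y n).mulVec v) = cinner v ((∑ n, Y n).mulVec v) := by
  simp only [cinner, Matrix.mulVec, dotProduct, Matrix.sum_apply, Finset.sum_mul,
    Finset.mul_sum]
  rw [Finset.sum_comm]
  refine Finset.sum_congr rfl fun k _ => ?_
  rw [Finset.sum_comm]

lemma proj_diag_re_nonneg {d : ℕ} (P : Matrix (Fin d) (Fin d) ℂ) (hH : P.IsHermitian)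
    (hI : P * P = P) (i : Fin d) : 0 ≤ (P i i).re := by
  have := psd_re_nonneg P hH hI (Pi.single i 1)
  rwa [cinner_single] at this

/-- Eq. (36), `Î_F(B) = I(B:A)`: (a) every fragment measurement `Y` satisfies
`I(B:Y) ≤ I(B:A)`, where `p_{BA}(l,i) = pᵢ Re((B_l)ᵢᵢ)` is the system-side joint
distribution of `A` followed by `B`; and (b) the pointer measurement `X` achieves the
bound: `p_{BX} = p_{BA}`, hence `I(B:X) = I(B:A)`. -/
theorem stmt_17 {d m : ℕ} {L : Type*} [Fintype L] [DecidableEq L]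
    (p : Fin d → ℝ) (hp0 : ∀ i, 0 ≤ p i) (hp1 : ∑ i, p i = 1)
    (Ψ : Fin d → Fin m → ℂ)
    (hΨ : ∀ i j, cinner (Ψ i) (Ψ j) = if i = j then 1 else 0)
    (B : L → Matrix (Fin d) (Fin d) ℂ) (hB : IsProjMeasurement B)
    (pBA : L → Fin d → ℝ)
    (hBA : ∀ l i, pBA l i = p i * ((B l) i i).re) :
    (∀ (N : Type) (_ : Fintype N) (_ : DecidableEq N)
        (Y : N → Matrix (Fin m) (Fin m) ℂ), IsProjMeasurement Y →
      mutualInfo (fun l n => (((B l ⊗ₖ Y n) * sigmaSF p Ψ).trace).re) ≤ mutualInfo pBA) ∧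
    (fun l i => (((B l ⊗ₖ projVec (Ψ i)) * sigmaSF p Ψ).trace).re) = pBA ∧
    mutualInfo (fun l i => (((B l ⊗ₖ projVec (Ψ i)) * sigmaSF p Ψ).trace).re)
      = mutualInfo pBA := by
  obtain ⟨hBh, hBo, hBs⟩ := hB
  have hbpart : (fun l i => (((B l ⊗ₖ projVec (Ψ i)) * sigmaSF p Ψ).trace).re) = pBA := by
    funext l i
    rw [trace_re p Ψ (B l) (hBh l) (projVec (Ψ i))]
    have hc : ∀ j, (cinner (Ψ j) ((projVec (Ψ i)).mulVec (Ψ j))).re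
        = if j = i then 1 else 0 := by
      intro j
      rw [cinner_proj_mulVec, hΨ j i, hΨ i j]
      by_cases h : i = j
      · subst h; simp
      · simp [h, Ne.symm h]
    simp only [hc, mul_ite, mul_one, mul_zero, Finset.sum_ite_eq', Finset.mem_univ, if_true]
    exact (hBA l i).symm
  refine ⟨?_, hbpart, by rw [hbpart]⟩
  intro N _ _ Y hY
  obtain ⟨hYh, hYo, hYs⟩ := hY
  have heq : (fun l n => (((B l ⊗ₖ Y n) * sigmaSF p Ψ).trace).re)
      = fun l n => ∑ i, pBA l i * (cinner (Ψ i) ((Y n).mulVec (Ψ i))).re := by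
    funext l n
    rw [trace_re p Ψ (B l) (hBh l) (Y n)]
    exact Finset.sum_congr rfl fun i _ => by rw [hBA]
  rw [heq]
  apply dpi
  · intro l i
    rw [hBA]
    exact mul_nonneg (hp0 i) (proj_diag_re_nonneg _ (hBh l) (by simpa using hBo l l) i)
  · intro i n
    exact psd_re_nonneg _ (hYh n) (by simpa using hYo n n) _
  · intro i
    rw [← Complex.re_sum, cinner_sum_mulVec, hYs, Matrix.one_mulVec, hΨ i i]
    simp
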